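/- Let G be a group, let H₁,…,H_s be finite-index subgroups of G with virtual endomorphisms f_i : H_i → G, and suppose the common core is trivial, i.e., the only subgroup K ≤ ∩_{i=1}^s H_i normal in G with f_i(K) ⊆ K for all i is trivial. Let K₀ be a transitive subgroup of Sym({1,…,s}), let W = G ≀ K₀ be the restricted permutational wreath product, let H = H₁ × ⋯ × H_s ≤ G^s ≤ W, and define f : H → G^s ≤ W by f(h₁,…,h_s) = (f₁(h₁),…,f_s(h_s)). Then any subgroup L ≤ H that is normal in W and satisfies f(L) ⊆ L is trivial. -/
import Mathlib


/-- Let `G` be a group with finite-index subgroups `H i` and virtual endomorphisms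
`f i : H i →* G` whose common core is trivial.  Let `K₀` be a transitive subgroup of
`Sym(Fin s)` and form the restricted wreath product `W = G ≀ K₀` with base `G^s = Fin s → G`.
Any subgroup `L` of `H₁ × ⋯ × H_s` which is normal in `W` (i.e. normal in the base group
and stable under the coordinate permutations coming from `K₀`) and `f`-invariant is trivial. -/
theorem stmt2 {G : Type*} [Group G] {s : ℕ} (hs : 1 ≤ s)
    (H : Fin s → Subgroup G) (hfin : ∀ i, (H i).FiniteIndex)
    (f : ∀ i, (H i) →* G)
    (hcore : ∀ K : Subgroup G, K.Normal → (∀ i, K ≤ H i) →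
      (∀ (i : Fin s) (x : G) (hx : x ∈ H i), x ∈ K → f i ⟨x, hx⟩ ∈ K) → K = ⊥)
    (K₀ : Subgroup (Equiv.Perm (Fin s)))
    (htrans : ∀ i j : Fin s, ∃ π ∈ K₀, π i = j)
    (L : Subgroup (Fin s → G))
    (hLH : ∀ g ∈ L, ∀ i, g i ∈ H i)
    (hLnorm : L.Normal)
    (hLperm : ∀ π ∈ K₀, ∀ g ∈ L, (fun i => g (π i)) ∈ L)
    (hLf : ∀ (g : Fin s → G) (hg : g ∈ L), (fun i => f i ⟨g i, hLH g hg i⟩) ∈ L) :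
    L = ⊥ := by
  classical
  have i0 : Fin s := ⟨0, hs⟩
  set ev : ∀ _ : Fin s, (Fin s → G) →* G := fun i => Pi.evalMonoidHom (fun _ => G) i with hev
  have hmapeq : ∀ i j : Fin s, L.map (ev i) ≤ L.map (ev j) := by
    intro i j x hx
    rw [Subgroup.mem_map] at hx ⊢
    obtain ⟨g, hg, rfl⟩ := hx
    obtain ⟨π, hπ, hπj⟩ := htrans j i
    exact ⟨fun k => g (π k), hLperm π hπ g hg, by simp [ev, hπj]⟩
  set K : Subgroup G := L.map (ev i0) with hK
  have hKi : ∀ i, L.map (ev i) = K := fun i => le_antisymm (hmapeq i i0) (hmapeq i0 i)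
  have hKnorm : K.Normal := by
    constructor
    intro x hx c
    rw [hK, Subgroup.mem_map] at hx ⊢
    obtain ⟨g, hg, rfl⟩ := hx
    refine ⟨(fun k => if k = i0 then c else 1) * g * (fun k => if k = i0 then c else 1)⁻¹,
      hLnorm.conj_mem g hg _, ?_⟩
    simp [ev]
  have hKH : ∀ i, K ≤ H i := by
    intro i x hx
    rw [← hKi i, Subgroup.mem_map] at hx
    obtain ⟨g, hg, rfl⟩ := hx
    exact hLH g hg i
  have hKf : ∀ (i : Fin s) (x : G) (hx : x ∈ H i), x ∈ K → f i ⟨x, hx⟩ ∈ K := by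
    intro i x hx hxK
    rw [← hKi i, Subgroup.mem_map] at hxK ⊢
    obtain ⟨g, hg, rfl⟩ := hxK
    exact ⟨_, hLf g hg, rfl⟩
  have hKbot := hcore K hKnorm hKH hKf
  ext g
  simp only [Subgroup.mem_bot]
  constructor
  · intro hg
    funext i
    have hmem : ev i g ∈ K := (hKi i) ▸ Subgroup.mem_map_of_mem _ hg
    rw [hKbot, Subgroup.mem_bot] at hmem
    simpa [ev] using hmem
  · rintro rfl; exact L.one_mem
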